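/- Let k be a commutative ring, A a commutative k-algebra, p ∈ ℕ and Δ ⊆ ℕ^p a nonempty co-ideal. For every D ∈ HS^p_k(A;Δ) and every α ∈ Δ, the k-linear endomorphism D_α of A is a differential operator of order ≤ ⌊|α|/ℓ_α(D)⌋, where the bound is read as 0 when ℓ_α(D) = ∞. -/

import Mathlib

open scoped Classical

namespace HS

/-- multi-indices in `ℕ^p` -/
abbrev MIdx (p : ℕ) := Fin p → ℕ

/-- the total weight `|α|` of a multi-index -/
def wt {p : ℕ} (α : MIdx p) : ℕ := ∑ i, α i

/-- a non-empty co-ideal of `ℕ^p` -/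
def IsCoideal {p : ℕ} (Δ : Set (MIdx p)) : Prop :=
  Δ.Nonempty ∧ ∀ ⦃α : MIdx p⦄, α ∈ Δ → ∀ ⦃β : MIdx p⦄, β ≤ α → β ∈ Δ

/-- Convolution product of two power series, given by their coefficient families:
this is the multiplication of `R[[s]]_Δ` (in terms of representatives). -/
def sconv {p : ℕ} {R : Type*} [NonUnitalNonAssocSemiring R] (f g : MIdx p → R) : MIdx p → R :=
  fun α => ∑ β ∈ Finset.Iic α, f β * g (α - β)

/-- Applying a series of linear operators to a series of module elements; for an
operator family `f`, `fapply f` is the induced `k[[s]]_Δ`-linear map `f̃ = ∑ f_β s^β`. -/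
def fapply {p : ℕ} {k M N : Type*} [Semiring k] [AddCommMonoid M] [AddCommMonoid N]
    [Module k M] [Module k N] (f : MIdx p → (M →ₗ[k] N)) (m : MIdx p → M) : MIdx p → N :=
  fun α => ∑ β ∈ Finset.Iic α, f β (m (α - β))

/-- a series of scalars acting on a series of module elements:
the module structure of `M[[s]]_Δ` over `A[[s]]_Δ` (in terms of representatives). -/
def smul' {p : ℕ} {A M : Type*} [Semiring A] [AddCommMonoid M] [Module A M]
    (a : MIdx p → A) (m : MIdx p → M) : MIdx p → M :=
  fun α => ∑ β ∈ Finset.Iic α, a β • m (α - β)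

/-- the unit (delta) series `1` -/
def one' {p : ℕ} {R : Type*} [Zero R] [One R] : MIdx p → R :=
  fun α => if α = 0 then 1 else 0

/-- `D` is a `(p,Δ)`-variate Hasse–Schmidt derivation of `A` over `k`:
`D_0 = id` and the Leibniz rule `D_α(xy) = ∑_{β+γ=α} D_β(x) D_γ(y)` for `α ∈ Δ`. -/
def IsHS (k A : Type*) [CommRing k] [CommRing A] [Algebra k A] {p : ℕ}
    (Δ : Set (MIdx p)) (D : MIdx p → Module.End k A) : Prop :=
  D 0 = 1 ∧ ∀ α ∈ Δ, ∀ x y : A,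
    D α (x * y) = ∑ β ∈ Finset.Iic α, D β x * D (α - β) y

/-- `P` is a `k`-linear differential operator of `A` of order `≤ n` -/
def IsDiffOpOfOrder (k A : Type*) [CommRing k] [CommRing A] [Algebra k A] :
    ℕ → Module.End k A → Prop
  | 0, P => ∀ a x : A, P (a * x) = a * P x
  | n + 1, P => ∀ a : A, IsDiffOpOfOrder k A n
      (P * LinearMap.mulLeft k a - LinearMap.mulLeft k a * P)

/-- `ℓ_α(D) = min{ |β| : β ∈ Δ, β ≤ α, β ≠ 0, D_β ≠ 0 }`, with the convention
`Nat.sInf ∅ = 0` standing for `ℓ_α(D) = ∞` (note `wt α / 0 = 0` in `ℕ`, matching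
the convention that the bound `⌊|α|/ℓ_α(D)⌋` is `0` when `ℓ_α(D) = ∞`). -/
noncomputable def ellAt {k A : Type*} [CommRing k] [CommRing A] [Algebra k A] {p : ℕ}
    (Δ : Set (MIdx p)) (D : MIdx p → Module.End k A) (α : MIdx p) : ℕ :=
  sInf {n : ℕ | ∃ β ∈ Δ, β ≤ α ∧ β ≠ 0 ∧ D β ≠ 0 ∧ wt β = n}

section Lemmas
variable (k A : Type*) [CommRing k] [CommRing A] [Algebra k A]

lemma diffOp_zero : ∀ n, IsDiffOpOfOrder k A n 0
  | 0 => fun a x => by simp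
  | n + 1 => fun a => by
      have : (0 : Module.End k A) * LinearMap.mulLeft k a - LinearMap.mulLeft k a * 0 = 0 := by
        simp
      rw [this]; exact diffOp_zero n

lemma diffOp_add : ∀ n, ∀ P Q : Module.End k A, IsDiffOpOfOrder k A n P →
    IsDiffOpOfOrder k A n Q → IsDiffOpOfOrder k A n (P + Q)
  | 0, P, Q, hP, hQ => fun a x => by
      simp only [LinearMap.add_apply, hP a x, hQ a x, mul_add]
  | n + 1, P, Q, hP, hQ => fun a => by
      have : (P + Q) * LinearMap.mulLeft k a - LinearMap.mulLeft k a * (P + Q)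
          = (P * LinearMap.mulLeft k a - LinearMap.mulLeft k a * P)
            + (Q * LinearMap.mulLeft k a - LinearMap.mulLeft k a * Q) := by
        noncomm_ring
      rw [this]; exact diffOp_add n _ _ (hP a) (hQ a)

lemma diffOp_sum {ι : Type*} (s : Finset ι) (f : ι → Module.End k A) (n : ℕ)
    (h : ∀ i ∈ s, IsDiffOpOfOrder k A n (f i)) :
    IsDiffOpOfOrder k A n (∑ i ∈ s, f i) := by
  classical
  induction s using Finset.induction_on with
  | empty => simpa using diffOp_zero k A n
  | insert _ _ hni ih =>
      rw [Finset.sum_insert hni]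
      exact diffOp_add k A n _ _ (h _ (Finset.mem_insert_self _ _))
        (ih fun i hi => h i (Finset.mem_insert_of_mem hi))

lemma diffOp_mulLeft_comp : ∀ n, ∀ (b : A) (Q : Module.End k A), IsDiffOpOfOrder k A n Q →
    IsDiffOpOfOrder k A n (LinearMap.mulLeft k b * Q)
  | 0, b, Q, hQ => fun a x => by
      simp only [Module.End.mul_apply, LinearMap.mulLeft_apply, hQ a x]
      ring
  | n + 1, b, Q, hQ => fun a => by
      have hcomm : LinearMap.mulLeft k a * LinearMap.mulLeft k b
          = LinearMap.mulLeft k b * LinearMap.mulLeft k a := by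
        ext x; simp [Module.End.mul_apply, mul_assoc, mul_left_comm]
      have : (LinearMap.mulLeft k b * Q) * LinearMap.mulLeft k a
            - LinearMap.mulLeft k a * (LinearMap.mulLeft k b * Q)
          = LinearMap.mulLeft k b * (Q * LinearMap.mulLeft k a - LinearMap.mulLeft k a * Q) := by
        rw [mul_sub, mul_assoc, ← mul_assoc (LinearMap.mulLeft k a), hcomm, mul_assoc]
      rw [this]; exact diffOp_mulLeft_comp n b _ (hQ a)

lemma diffOp_succ : ∀ n, ∀ P : Module.End k A, IsDiffOpOfOrder k A n P →
    IsDiffOpOfOrder k A (n + 1) P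
  | 0, P, hP => fun a => by
      have : P * LinearMap.mulLeft k a - LinearMap.mulLeft k a * P = 0 := by
        ext x; simp [Module.End.mul_apply, hP a x]
      rw [this]; exact diffOp_zero k A 0
  | n + 1, P, hP => fun a => diffOp_succ n _ (hP a)

lemma diffOp_mono {n m : ℕ} (h : n ≤ m) {P : Module.End k A}
    (hP : IsDiffOpOfOrder k A n P) : IsDiffOpOfOrder k A m P := by
  induction m with
  | zero => exact Nat.le_zero.mp h ▸ hP
  | succ m ih =>
      rcases Nat.lt_or_ge n (m + 1) with h' | h'
      · exact diffOp_succ k A m P (ih (Nat.lt_succ_iff.mp h'))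
      · exact (Nat.le_antisymm h h') ▸ hP

end Lemmas

lemma wt_add_wt_sub {p : ℕ} {α β : MIdx p} (h : β ≤ α) : wt β + wt (α - β) = wt α := by
  unfold wt
  rw [← Finset.sum_add_distrib]
  exact Finset.sum_congr rfl fun i _ => Nat.add_sub_cancel' (h i)

lemma wt_eq_zero {p : ℕ} {β : MIdx p} (h : wt β = 0) : β = 0 := by
  funext i
  exact Finset.sum_eq_zero_iff.mp h i (Finset.mem_univ i)

/-- For every `(p,Δ)`-variate Hasse–Schmidt derivation `D` and every
`α ∈ Δ`, the component `D_α` is a differential operator of order `≤ ⌊|α|/ℓ_α(D)⌋`. -/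
theorem stmt5 (k A : Type*) [CommRing k] [CommRing A] [Algebra k A]
    (p : ℕ) (Δ : Set (MIdx p)) (hΔ : IsCoideal Δ)
    (D : MIdx p → Module.End k A) (hD : IsHS k A Δ D) :
    ∀ α ∈ Δ, IsDiffOpOfOrder k A (wt α / ellAt Δ D α) (D α) := by
  have hsub0 : ∀ α : MIdx p, α - 0 = α := fun α => by funext i; simp
  have h0mem : ∀ α : MIdx p, (0 : MIdx p) ∈ Finset.Iic α := fun α =>
    Finset.mem_Iic.mpr (fun i => Nat.zero_le _)
  -- the commutator identity
  have key : ∀ α ∈ Δ, ∀ a : A,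
      D α * LinearMap.mulLeft k a - LinearMap.mulLeft k a * D α
        = ∑ β ∈ (Finset.Iic α).erase 0, LinearMap.mulLeft k (D β a) * D (α - β) := by
    intro α hα a
    ext x
    simp only [LinearMap.sub_apply, Module.End.mul_apply, LinearMap.mulLeft_apply]
    rw [hD.2 α hα a x, ← Finset.add_sum_erase _ _ (h0mem α), hD.1, hsub0 α]
    simp only [Module.End.one_apply]
    rw [add_sub_cancel_left]
    simp only [LinearMap.coe_sum, Finset.sum_apply, Module.End.mul_apply,
      LinearMap.mulLeft_apply]
  suffices H : ∀ N, ∀ α ∈ Δ, wt α < N → IsDiffOpOfOrder k A (wt α / ellAt Δ D α) (D α) by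
    exact fun α hα => H (wt α + 1) α hα (Nat.lt_succ_self _)
  intro N
  induction N with
  | zero => intro α _ h; omega
  | succ N ih =>
    intro α hα hw
    by_cases hSn : {n : ℕ | ∃ β ∈ Δ, β ≤ α ∧ β ≠ 0 ∧ D β ≠ 0 ∧ wt β = n}.Nonempty
    · have hmem : ellAt Δ D α ∈ {n : ℕ | ∃ β ∈ Δ, β ≤ α ∧ β ≠ 0 ∧ D β ≠ 0 ∧ wt β = n} :=
        Nat.sInf_mem hSn
      obtain ⟨β₀, hβ₀Δ, hβ₀le, hβ₀ne, _, hβ₀wt⟩ := hmem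
      have hℓpos : 0 < ellAt Δ D α := by
        rcases Nat.eq_zero_or_pos (ellAt Δ D α) with h | h
        · exact absurd (wt_eq_zero (by omega)) hβ₀ne
        · exact h
      have hℓle : ellAt Δ D α ≤ wt α := by
        rw [← hβ₀wt, ← wt_add_wt_sub hβ₀le]; exact Nat.le_add_right _ _
      have hdiv : 1 ≤ wt α / ellAt Δ D α := (Nat.one_le_div_iff hℓpos).mpr hℓle
      obtain ⟨n, hn⟩ : ∃ n, wt α / ellAt Δ D α = n + 1 := ⟨wt α / ellAt Δ D α - 1, by omega⟩
      rw [hn]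
      intro a
      rw [key α hα a]
      apply diffOp_sum
      intro β hβ
      have hβle : β ≤ α := Finset.mem_Iic.mp (Finset.mem_of_mem_erase hβ)
      have hβne : β ≠ 0 := Finset.ne_of_mem_erase hβ
      by_cases hDβ : D β = 0
      · rw [hDβ]
        simp only [LinearMap.zero_apply]
        rw [show LinearMap.mulLeft k (0 : A) = 0 from by ext x; simp]
        rw [zero_mul]
        exact diffOp_zero k A n
      · have hβΔ : β ∈ Δ := hΔ.2 hα hβle
        have hwtβ : ellAt Δ D α ≤ wt β := Nat.sInf_le ⟨β, hβΔ, hβle, hβne, hDβ, rfl⟩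
        have hαβle : α - β ≤ α := fun i => Nat.sub_le _ _
        have hαβΔ : α - β ∈ Δ := hΔ.2 hα hαβle
        have hwtsum := wt_add_wt_sub hβle
        have hwtβpos : 0 < wt β := by
          rcases Nat.eq_zero_or_pos (wt β) with h | h
          · exact absurd (wt_eq_zero h) hβne
          · exact h
        have hlt : wt (α - β) < N := by omega
        apply diffOp_mulLeft_comp
        refine diffOp_mono k A ?_ (ih (α - β) hαβΔ hlt)
        have hstep : (wt α - ellAt Δ D α) / ellAt Δ D α ≤ n := by
          have : (wt α - ellAt Δ D α) / ellAt Δ D α + 1 = wt α / ellAt Δ D α := by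
            rw [← Nat.add_div_right _ hℓpos, Nat.sub_add_cancel hℓle]
          omega
        by_cases hS' : {n : ℕ | ∃ β' ∈ Δ, β' ≤ α - β ∧ β' ≠ 0 ∧ D β' ≠ 0 ∧ wt β' = n}.Nonempty
        · have hℓ'S : ellAt Δ D (α - β) ∈
              {n : ℕ | ∃ β' ∈ Δ, β' ≤ α - β ∧ β' ≠ 0 ∧ D β' ≠ 0 ∧ wt β' = n} :=
            Nat.sInf_mem hS'
          obtain ⟨β', hβ'Δ, hβ'le, hβ'ne, hDβ', hβ'wt⟩ := hℓ'S
          have hℓℓ' : ellAt Δ D α ≤ ellAt Δ D (α - β) :=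
            Nat.sInf_le ⟨β', hβ'Δ, le_trans hβ'le hαβle, hβ'ne, hDβ', hβ'wt⟩
          calc wt (α - β) / ellAt Δ D (α - β) ≤ wt (α - β) / ellAt Δ D α :=
                Nat.div_le_div_left hℓℓ' hℓpos
            _ ≤ (wt α - ellAt Δ D α) / ellAt Δ D α := Nat.div_le_div_right (by omega)
            _ ≤ n := hstep
        · have : ellAt Δ D (α - β) = 0 := by
            unfold ellAt
            rw [Set.not_nonempty_iff_eq_empty.mp hS']
            exact Nat.sInf_empty
          rw [this, Nat.div_zero]
          exact Nat.zero_le n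
    · have hℓ0 : ellAt Δ D α = 0 := by
        unfold ellAt
        rw [Set.not_nonempty_iff_eq_empty.mp hSn]
        exact Nat.sInf_empty
      rw [hℓ0, Nat.div_zero]
      intro a x
      rw [hD.2 α hα a x, ← Finset.add_sum_erase _ _ (h0mem α)]
      have hrest : ∑ β ∈ (Finset.Iic α).erase 0, D β a * D (α - β) x = 0 := by
        apply Finset.sum_eq_zero
        intro β hβ
        have hβle : β ≤ α := Finset.mem_Iic.mp (Finset.mem_of_mem_erase hβ)
        have hβne : β ≠ 0 := Finset.ne_of_mem_erase hβ
        have hDβ : D β = 0 := by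
          by_contra hne
          exact hSn ⟨wt β, β, hΔ.2 hα hβle, hβle, hβne, hne, rfl⟩
        rw [hDβ]; simp
      rw [hrest, add_zero, hD.1, hsub0 α]
      simp

end HS
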